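/- Let R be a prime ring, σ an automorphism of R, and δ a σ-derivation of R. Then the Ore extension A = R[x; σ, δ] is a prime ring. -/

import Mathlib

/-- `A` is the Ore extension `R[x; σ, δ]`: `R` embeds via `i`, `x·r = σ(r)·x + δ(r)`, and
`A` is a free left `R`-module with basis the powers of `x`. -/
structure IsOreExtension {R A : Type*} [Ring R] [Ring A]
    (σ : R →+* R) (δ : R → R) (i : R →+* A) (x : A) : Prop where
  inj : Function.Injective i
  comm : ∀ r : R, x * i r = i (σ r) * x + i (δ r)
  repr : ∀ a : A, ∃! c : ℕ →₀ R, a = c.sum fun k r => i r * x ^ k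

/-- A ring is prime if the product of two nonzero two-sided ideals is nonzero. -/
def IsPrimeRing' (R : Type*) [Ring R] : Prop :=
  ∀ J K : TwoSidedIdeal R, (∀ a ∈ J, ∀ b ∈ K, a * b = 0) → J = ⊥ ∨ K = ⊥

section Aux

variable {R A : Type*} [Ring R] [Ring A]

/-- The "evaluation" map sending a finsupp of coefficients to the element of `A`. -/
noncomputable def OrePhi (i : R →+* A) (x : A) (c : ℕ →₀ R) : A :=
  c.sum fun k r => i r * x ^ k

/-- `a` has a representation whose coefficient at `n` is `p` and vanishing above `n`. -/
def OreRep (i : R →+* A) (x : A) (a : A) (n : ℕ) (p : R) : Prop :=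
  ∃ c : ℕ →₀ R, a = OrePhi i x c ∧ c n = p ∧ ∀ j, n < j → c j = 0

variable (i : R →+* A) (x : A)

lemma orePhi_zero : OrePhi i x 0 = 0 := Finsupp.sum_zero_index

lemma orePhi_add (c c' : ℕ →₀ R) :
    OrePhi i x (c + c') = OrePhi i x c + OrePhi i x c' := by
  refine Finsupp.sum_add_index' (fun k => by simp) (fun k r s => by rw [map_add, add_mul])

lemma orePhi_single (k : ℕ) (r : R) : OrePhi i x (Finsupp.single k r) = i r * x ^ k := by
  rw [OrePhi, Finsupp.sum_single_index (by simp)]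

variable {σ : R →+* R} {δ : R → R}

lemma orePhi_inj (hA : IsOreExtension σ δ i x) : Function.Injective (OrePhi i x) := by
  intro c c' h
  obtain ⟨d, -, hu⟩ := hA.repr (OrePhi i x c)
  rw [hu c rfl, hu c' h]

lemma oreRep_zero (n : ℕ) : OreRep i x 0 n 0 :=
  ⟨0, (orePhi_zero i x).symm, rfl, fun _ _ => rfl⟩

lemma oreRep_add {a b : A} {n : ℕ} {p q : R} (ha : OreRep i x a n p)
    (hb : OreRep i x b n q) : OreRep i x (a + b) n (p + q) := by
  obtain ⟨c, hc, hcn, hct⟩ := ha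
  obtain ⟨d, hd, hdn, hdt⟩ := hb
  exact ⟨c + d, by rw [hc, hd, orePhi_add], by simp [hcn, hdn],
    fun j hj => by simp [hct j hj, hdt j hj]⟩

lemma oreRep_pad {a : A} {n n' : ℕ} {p : R} (ha : OreRep i x a n p) (h : n ≤ n') :
    OreRep i x a n' (if n = n' then p else 0) := by
  obtain ⟨c, hc, hcn, hct⟩ := ha
  refine ⟨c, hc, ?_, fun j hj => hct j (lt_of_le_of_lt h hj)⟩
  rcases eq_or_lt_of_le h with h' | h'
  · simp [h', ← hcn]
  · simp [Nat.ne_of_lt h', hct n' h']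

lemma oreRep_pad_lt {a : A} {n n' : ℕ} {p : R} (ha : OreRep i x a n p) (h : n < n') :
    OreRep i x a n' 0 := by
  obtain ⟨c, hc, hcn, hct⟩ := ha
  exact ⟨c, hc, hct n' h, fun j hj => hct j (lt_trans h hj)⟩

lemma oreRep_sum {ι : Type*} (S : Finset ι) (f : ι → A) (n : ℕ) (g : ι → R)
    (h : ∀ j ∈ S, OreRep i x (f j) n (g j)) :
    OreRep i x (∑ j ∈ S, f j) n (∑ j ∈ S, g j) := by
  classical
  induction S using Finset.induction_on with
  | empty => simpa using oreRep_zero i x n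
  | @insert s t hnotmem ih =>
      rw [Finset.sum_insert hnotmem, Finset.sum_insert hnotmem]
      exact oreRep_add i x (h s (Finset.mem_insert_self s t))
        (ih fun j hj => h j (Finset.mem_insert_of_mem hj))

lemma oreRep_single (k : ℕ) (r : R) : OreRep i x (i r * x ^ k) k r :=
  ⟨Finsupp.single k r, (orePhi_single i x k r).symm, by simp,
    fun j hj => Finsupp.single_eq_of_ne (Nat.ne_of_gt hj)⟩

lemma oreRep_const_mul {b : A} {k : ℕ} {q : R} (hb : OreRep i x b k q) (r : R) :
    OreRep i x (i r * b) k (r * q) := by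
  obtain ⟨c, hc, hcn, hct⟩ := hb
  refine ⟨c.mapRange (r * ·) (mul_zero r), ?_, by simp [hcn], fun j hj => by simp [hct j hj]⟩
  rw [hc, OrePhi, OrePhi, Finsupp.sum_mapRange_index (fun k => by simp)]
  rw [Finsupp.sum, Finsupp.sum, Finset.mul_sum]
  exact Finset.sum_congr rfl fun k _ => by rw [map_mul, mul_assoc]

lemma oreRep_mul_xpow {a : A} {n : ℕ} {p : R} (ha : OreRep i x a n p) (l : ℕ) :
    OreRep i x (a * x ^ l) (n + l) p := by
  obtain ⟨c, hc, hcn, hct⟩ := ha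
  refine ⟨c.mapDomain (· + l), ?_, ?_, ?_⟩
  · rw [hc, OrePhi, OrePhi, Finsupp.sum_mapDomain_index (fun k => by simp)
      (fun k r s => by rw [map_add, add_mul]), Finsupp.sum, Finsupp.sum, Finset.sum_mul]
    exact Finset.sum_congr rfl fun k _ => by rw [mul_assoc, pow_add]
  · rw [Finsupp.mapDomain_apply (add_left_injective l), hcn]
  · intro j hj
    rcases le_or_gt l j with h | h
    · obtain ⟨k, rfl⟩ := Nat.exists_eq_add_of_le' h
      rw [Finsupp.mapDomain_apply (add_left_injective l)]
      exact hct k (by omega)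
    · refine Finsupp.mapDomain_notin_range _ _ ?_
      rintro ⟨k, rfl⟩; omega

lemma oreRep_x_mul (hA : IsOreExtension σ δ i x) {a : A} {k : ℕ} {p : R} (ha : OreRep i x a k p) :
    OreRep i x (x * a) (k + 1) (σ p) := by
  classical
  obtain ⟨c, hc, hcn, hct⟩ := ha
  have expand : x * a = ∑ j ∈ c.support, x * (i (c j) * x ^ j) := by
    rw [hc, OrePhi, Finsupp.sum, Finset.mul_sum]
  have term : ∀ j ∈ c.support, OreRep i x (x * (i (c j) * x ^ j)) (j + 1) (σ (c j)) := by
    intro j _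
    have : x * (i (c j) * x ^ j) = i (σ (c j)) * x ^ (j + 1) + i (δ (c j)) * x ^ j := by
      rw [← mul_assoc, hA.comm, add_mul, pow_succ', ← mul_assoc]
    rw [this]
    have h1 := oreRep_single i x (j + 1) (σ (c j))
    have h2 := oreRep_pad_lt i x (oreRep_single i x j (δ (c j))) (Nat.lt_succ_self j)
    simpa using oreRep_add i x h1 h2
  have bound : ∀ j ∈ c.support, j ≤ k := by
    intro j hj
    by_contra h
    exact (Finsupp.mem_support_iff.mp hj) (hct j (by omega))
  have : OreRep i x (∑ j ∈ c.support, x * (i (c j) * x ^ j)) (k + 1)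
      (∑ j ∈ c.support, if j + 1 = k + 1 then σ (c j) else 0) := by
    refine oreRep_sum i x _ _ _ _ fun j hj => ?_
    have := oreRep_pad i x (n' := k + 1) (term j hj) (by have := bound j hj; omega)
    exact this
  rw [← expand] at this
  convert this using 1
  rw [Finset.sum_congr rfl (fun j _ =>
    (if_congr (add_left_inj 1) rfl rfl :
      (if j + 1 = k + 1 then σ (c j) else 0) = (if j = k then σ (c j) else 0)))]
  rw [Finset.sum_ite_eq' c.support k (fun j => σ (c j))]
  by_cases hk : k ∈ c.support
  · simp [hk, hcn]
  · rw [if_neg hk]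
    rw [Finsupp.notMem_support_iff.mp hk] at hcn
    rw [← hcn, map_zero]

lemma oreRep_xpow_mul_const (hA : IsOreExtension σ δ i x) (k : ℕ) (s : R) :
    OreRep i x (x ^ k * i s) k ((σ ^ k) s) := by
  induction k with
  | zero => simpa using oreRep_single i x 0 s
  | succ k ih =>
      have : x ^ (k + 1) * i s = x * (x ^ k * i s) := by
        rw [pow_succ', mul_assoc]
      rw [this, show (σ ^ (k + 1)) s = σ ((σ ^ k) s) by
        rw [RingHom.coe_pow, RingHom.coe_pow, Function.iterate_succ_apply']]
      exact oreRep_x_mul i x hA ih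

lemma oreRep_mul_const (hA : IsOreExtension σ δ i x) {a : A} {n : ℕ} {p : R} (ha : OreRep i x a n p) (s : R) :
    OreRep i x (a * i s) n (p * (σ ^ n) s) := by
  classical
  obtain ⟨c, hc, hcn, hct⟩ := ha
  have expand : a * i s = ∑ k ∈ c.support, i (c k) * (x ^ k * i s) := by
    rw [hc, OrePhi, Finsupp.sum, Finset.sum_mul]
    exact Finset.sum_congr rfl fun k _ => by rw [mul_assoc]
  have bound : ∀ k ∈ c.support, k ≤ n := by
    intro k hk
    by_contra h
    exact (Finsupp.mem_support_iff.mp hk) (hct k (by omega))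
  have : OreRep i x (∑ k ∈ c.support, i (c k) * (x ^ k * i s)) n
      (∑ k ∈ c.support, if k = n then c k * (σ ^ k) s else 0) := by
    refine oreRep_sum i x _ _ _ _ fun k hk => ?_
    exact oreRep_pad i x (oreRep_const_mul i x (oreRep_xpow_mul_const i x hA k s) (c k))
      (bound k hk)
  rw [← expand] at this
  convert this using 1
  rw [Finset.sum_ite_eq' c.support n (fun k => c k * (σ ^ k) s)]
  by_cases hn : n ∈ c.support
  · simp [hn, hcn]
  · rw [if_neg hn]
    rw [Finsupp.notMem_support_iff.mp hn] at hcn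
    rw [← hcn, zero_mul]

lemma oreRep_mul (hA : IsOreExtension σ δ i x) {a b : A} {n m : ℕ} {p q : R} (ha : OreRep i x a n p)
    (hb : OreRep i x b m q) : OreRep i x (a * b) (n + m) (p * (σ ^ n) q) := by
  classical
  obtain ⟨d, hd, hdm, hdt⟩ := hb
  have expand : a * b = ∑ l ∈ d.support, (a * i (d l)) * x ^ l := by
    rw [hd, OrePhi, Finsupp.sum, Finset.mul_sum]
    exact Finset.sum_congr rfl fun l _ => by rw [← mul_assoc]
  have bound : ∀ l ∈ d.support, l ≤ m := by
    intro l hl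
    by_contra h
    exact (Finsupp.mem_support_iff.mp hl) (hdt l (by omega))
  have : OreRep i x (∑ l ∈ d.support, (a * i (d l)) * x ^ l) (n + m)
      (∑ l ∈ d.support, if l = m then p * (σ ^ n) (d l) else 0) := by
    refine oreRep_sum i x _ _ _ _ fun l hl => ?_
    have h1 := oreRep_mul_xpow i x (oreRep_mul_const i x hA ha (d l)) l
    have h2 := oreRep_pad i x (n' := n + m) h1 (by have := bound l hl; omega)
    have h3 : (if l = m then p * (σ ^ n) (d l) else 0)
        = (if n + l = n + m then p * (σ ^ n) (d l) else 0) :=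
      if_congr (add_right_inj n).symm rfl rfl
    rw [h3]
    exact h2
  rw [← expand] at this
  convert this using 1
  rw [Finset.sum_ite_eq' d.support m (fun l => p * (σ ^ n) (d l))]
  by_cases hm : m ∈ d.support
  · simp [hm, hdm]
  · rw [if_neg hm]
    rw [Finsupp.notMem_support_iff.mp hm] at hdm
    rw [← hdm, map_zero, mul_zero]

lemma oreRep_eq_zero (hA : IsOreExtension σ δ i x) {a : A} {n : ℕ} {p : R} (ha : OreRep i x a n p) (h : a = 0) :
    p = 0 := by
  obtain ⟨c, hc, hcn, -⟩ := ha
  have : OrePhi i x c = OrePhi i x 0 := by rw [orePhi_zero, ← hc, h]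
  rw [← hcn, orePhi_inj i x hA this]
  rfl

lemma oreRep_exists (hA : IsOreExtension σ δ i x) {a : A} (h : a ≠ 0) : ∃ n p, p ≠ 0 ∧ OreRep i x a n p := by
  obtain ⟨c, hc, -⟩ := hA.repr a
  have hc0 : c ≠ 0 := by
    rintro rfl
    exact h (by rw [hc]; exact orePhi_zero i x)
  have hsupp : c.support.Nonempty := Finsupp.support_nonempty_iff.mpr hc0
  refine ⟨c.support.max' hsupp, c (c.support.max' hsupp),
    Finsupp.mem_support_iff.mp (c.support.max'_mem hsupp), c, hc, rfl, fun j hj => ?_⟩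
  by_contra hne
  exact absurd (Finset.le_max' _ j (Finsupp.mem_support_iff.mpr hne)) (by omega)

end Aux

/-- In a prime ring, `p R q = 0` forces `p = 0` or `q = 0`. -/
lemma prime_aux {R : Type*} [Ring R] (hprime : IsPrimeRing' R) {p q : R}
    (h : ∀ s, p * s * q = 0) : p = 0 ∨ q = 0 := by
  set J : TwoSidedIdeal R := TwoSidedIdeal.mk' {y | ∀ s, y * s * q = 0}
    (fun s => by simp)
    (fun {y z} hy hz s => by rw [add_mul, add_mul, hy s, hz s, add_zero])
    (fun {y} hy s => by rw [neg_mul, neg_mul, hy s, neg_zero])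
    (fun {r y} hy s => by rw [mul_assoc r y s, mul_assoc r (y * s) q, hy s, mul_zero])
    (fun {y r} hy s => by rw [mul_assoc y r s]; exact hy (r * s)) with hJ
  set K : TwoSidedIdeal R := TwoSidedIdeal.mk' {z | ∀ y ∈ J, ∀ s, y * s * z = 0}
    (fun y hy s => by simp)
    (fun {z w} hz hw y hy s => by rw [mul_add, hz y hy s, hw y hy s, add_zero])
    (fun {z} hz y hy s => by rw [mul_neg, hz y hy s, neg_zero])
    (fun {r z} hz y hy s => by rw [← mul_assoc, mul_assoc y s r]; exact hz y hy (s * r))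
    (fun {z r} hz y hy s => by rw [← mul_assoc, hz y hy s, zero_mul]) with hK
  have hpJ : p ∈ J := by rw [hJ, TwoSidedIdeal.mem_mk']; exact h
  have hqK : q ∈ K := by
    rw [hK, TwoSidedIdeal.mem_mk']
    intro y hy s
    rw [hJ, TwoSidedIdeal.mem_mk'] at hy
    exact hy s
  have := hprime J K (fun y hy z hz => by
    rw [hK, TwoSidedIdeal.mem_mk'] at hz
    have := hz y hy 1
    rwa [mul_one] at this)
  rcases this with hb | hb
  · left; rw [hb] at hpJ; exact hpJ
  · right; rw [hb] at hqK; exact hqK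

/-- Let `R` be a prime ring, `σ` an automorphism of `R`, and `δ` a
`σ`-derivation of `R`. Then the Ore extension `A = R[x; σ, δ]` is a prime ring. -/
theorem ore_extension_of_prime_is_prime
    {R A : Type*} [Ring R] [Ring A]
    (σ : R ≃+* R) (δ : R → R)
    (hadd : ∀ r s : R, δ (r + s) = δ r + δ s)
    (hleib : ∀ r s : R, δ (r * s) = σ r * δ s + δ r * s)
    (i : R →+* A) (x : A) (hA : IsOreExtension (σ : R →+* R) δ i x)
    (hprime : IsPrimeRing' R) :
    IsPrimeRing' A := by
  intro J K hJK
  by_contra hcon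
  push_neg at hcon
  obtain ⟨hJ, hK⟩ := hcon
  -- get nonzero elements
  have hex : ∀ (I : TwoSidedIdeal A), I ≠ ⊥ → ∃ a ∈ I, a ≠ 0 := by
    intro I hI
    by_contra h
    push_neg at h
    exact hI (eq_bot_iff.mpr fun y hy => (h y hy : y ∈ (⊥ : TwoSidedIdeal A)))
  obtain ⟨a, haJ, ha⟩ := hex J hJ
  obtain ⟨b, hbK, hb⟩ := hex K hK
  obtain ⟨n, p, hp, hra⟩ := oreRep_exists i x hA ha
  obtain ⟨m, q, hq, hrb⟩ := oreRep_exists i x hA hb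
  -- key: for all r, a * i r * b = 0
  have key : ∀ r : R, a * i r * b = 0 := fun r => by
    rw [mul_assoc]
    exact hJK a haJ (i r * b) (K.mul_mem_left (i r) b hbK)
  have coeffzero : ∀ r : R, p * ((σ : R →+* R) ^ n) r * (((σ : R →+* R) ^ n)) q = 0 := by
    intro r
    have h1 := oreRep_mul_const i x hA hra r
    have h2 := oreRep_mul i x hA h1 hrb
    exact oreRep_eq_zero i x hA h2 (key r)
  have hsurj : Function.Surjective ⇑((σ : R →+* R) ^ n) := by
    rw [RingHom.coe_pow]
    exact σ.surjective.iterate n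
  have hallr : ∀ s : R, p * s * ((σ : R →+* R) ^ n) q = 0 := by
    intro s
    obtain ⟨r, rfl⟩ := hsurj s
    exact coeffzero r
  rcases prime_aux hprime hallr with h | h
  · exact hp h
  · refine hq ?_
    have hinj : Function.Injective ⇑((σ : R →+* R) ^ n) := by
      rw [RingHom.coe_pow]
      exact σ.injective.iterate n
    exact hinj (by rw [h, map_zero])
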